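/- For a continuously differentiable path γ : [0,T] → ℝ, the supremum over finite partitions of the partition energy equals the Dirichlet energy: sup_Π (1/2)∑ᵢ |γ(tᵢ)-γ(tᵢ₋₁)|²/(tᵢ-tᵢ₋₁) = (1/2)∫₀ᵀ γ'(s)² ds. -/

import Mathlib

open Finset Set MeasureTheory

/-- A finite partition `0 = t₀ < t₁ < ⋯ < t_n = T` of `[0,T]`. -/
structure TimePartition (T : ℝ) where
  n : ℕ
  npos : 0 < n
  t : ℕ → ℝ
  mono : ∀ i < n, t i < t (i + 1)
  first : t 0 = 0
  last : t n = T

/-- The energy of a path `γ` with respect to a partition: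
`E^Π(γ) = (1/2)∑ᵢ |γ(tᵢ)-γ(tᵢ₋₁)|²/(tᵢ-tᵢ₋₁)`. -/
noncomputable def partEnergy {T : ℝ} (γ : ℝ → ℝ) (P : TimePartition T) : ℝ :=
  (1 / 2) * ∑ i ∈ Finset.range P.n, (γ (P.t (i + 1)) - γ (P.t i)) ^ 2 / (P.t (i + 1) - P.t i)


lemma sq_integral_le (f : ℝ → ℝ) (hf : Continuous f) {a b : ℝ} (hab : a < b) :
    (∫ x in a..b, f x) ^ 2 ≤ (b - a) * ∫ x in a..b, (f x) ^ 2 := by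
  have hb : (0:ℝ) < b - a := by linarith
  set I := ∫ x in a..b, f x with hI
  set c := I / (b - a) with hc
  have h0 : 0 ≤ ∫ x in a..b, (f x - c) ^ 2 :=
    intervalIntegral.integral_nonneg hab.le (fun x _ => sq_nonneg _)
  have hint : ∫ x in a..b, (f x - c) ^ 2
      = (∫ x in a..b, (f x) ^ 2) - 2 * c * I + c ^ 2 * (b - a) := by
    have h1 : IntervalIntegrable (fun x => (f x)^2) volume a b :=
      (hf.pow 2).intervalIntegrable _ _
    have h2 : IntervalIntegrable (fun x => 2 * c * f x) volume a b :=
      (continuous_const.mul hf).intervalIntegrable _ _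
    have : ∀ x, (f x - c)^2 = (f x)^2 - 2*c*f x + c^2 := by intro x; ring
    simp_rw [this]
    rw [intervalIntegral.integral_add (h1.sub h2) intervalIntegrable_const,
      intervalIntegral.integral_sub h1 h2, intervalIntegral.integral_const_mul,
      intervalIntegral.integral_const]
    rw [smul_eq_mul]; field_simp; ring
  have hcI : c * (b - a) = I := div_mul_cancel₀ _ hb.ne'
  rw [hint] at h0
  nlinarith [h0, hcI, sq_nonneg c]

lemma TimePartition.t_mono {T : ℝ} (P : TimePartition T) {i j : ℕ} (hij : i ≤ j) (hj : j ≤ P.n) :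
    P.t i ≤ P.t j := by
  induction j with
  | zero => simp_all
  | succ k ih =>
    rcases Nat.lt_or_ge i (k+1) with h | h
    · exact (ih (Nat.lt_succ_iff.mp h) (le_trans (Nat.le_succ k) hj)).trans
        (P.mono k (Nat.lt_of_succ_le hj)).le
    · have : i = k + 1 := le_antisymm hij h
      simp [this]

lemma two_partEnergy_le {T : ℝ} (γ : ℝ → ℝ) (hγ : ContDiff ℝ 1 γ) (P : TimePartition T) :
    ∑ i ∈ Finset.range P.n, (γ (P.t (i + 1)) - γ (P.t i)) ^ 2 / (P.t (i + 1) - P.t i)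
      ≤ ∫ s in (0:ℝ)..T, (deriv γ s) ^ 2 := by
  have hg : Continuous (deriv γ) := hγ.continuous_deriv le_rfl
  have hd : Differentiable ℝ γ := hγ.differentiable one_ne_zero
  have hsum : ∑ i ∈ Finset.range P.n, ∫ s in (P.t i)..(P.t (i+1)), (deriv γ s) ^ 2
      = ∫ s in (0:ℝ)..T, (deriv γ s) ^ 2 := by
    rw [intervalIntegral.sum_integral_adjacent_intervals (f := fun s => (deriv γ s) ^ 2)
      (fun k _ => (hg.pow 2).intervalIntegrable _ _), P.first, P.last]
  rw [← hsum]
  apply Finset.sum_le_sum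
  intro i hi
  have hlt : P.t i < P.t (i+1) := P.mono i (Finset.mem_range.mp hi)
  have hΔ : (0:ℝ) < P.t (i+1) - P.t i := by linarith
  have hftc : γ (P.t (i+1)) - γ (P.t i) = ∫ s in (P.t i)..(P.t (i+1)), deriv γ s := by
    rw [intervalIntegral.integral_deriv_eq_sub (fun x _ => hd x)
      (hg.intervalIntegrable _ _)]
  rw [hftc, div_le_iff₀ hΔ]
  calc (∫ s in (P.t i)..(P.t (i+1)), deriv γ s) ^ 2
      ≤ (P.t (i+1) - P.t i) * ∫ s in (P.t i)..(P.t (i+1)), (deriv γ s) ^ 2 :=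
        sq_integral_le _ hg hlt
    _ = (∫ s in (P.t i)..(P.t (i+1)), (deriv γ s) ^ 2) * (P.t (i+1) - P.t i) := by ring

lemma exists_partition_ge {T : ℝ} (hT : 0 < T) (γ : ℝ → ℝ) (hγ : ContDiff ℝ 1 γ)
    {ε : ℝ} (hε : 0 < ε) :
    ∃ P : TimePartition T,
      (∫ s in (0:ℝ)..T, (deriv γ s) ^ 2)
        ≤ (∑ i ∈ Finset.range P.n,
            (γ (P.t (i + 1)) - γ (P.t i)) ^ 2 / (P.t (i + 1) - P.t i)) + ε := by
  set g := deriv γ with hgdef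
  have hg : Continuous g := hγ.continuous_deriv le_rfl
  have hd : Differentiable ℝ γ := hγ.differentiable one_ne_zero
  -- bound on |g|
  obtain ⟨C, hC⟩ := (isCompact_Icc (a := (0:ℝ)) (b := T)).exists_bound_of_continuousOn
    hg.continuousOn
  set M := max C 1 with hMdef
  have hM : (0:ℝ) < M := lt_of_lt_of_le one_pos (le_max_right _ _)
  have hgM : ∀ x ∈ Icc (0:ℝ) T, |g x| ≤ M := fun x hx =>
    le_trans (by simpa using hC x hx) (le_max_left _ _)
  -- epsilon'
  set ε' := ε / (2 * M * T) with hε'def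
  have hε' : 0 < ε' := div_pos hε (by positivity)
  -- uniform continuity
  have hUC : UniformContinuousOn g (Icc 0 T) :=
    (isCompact_Icc).uniformContinuousOn_of_continuous hg.continuousOn
  obtain ⟨δ, hδ, hδ'⟩ := Metric.uniformContinuousOn_iff.mp hUC ε' hε'
  -- choose n
  obtain ⟨n, hn⟩ := exists_nat_gt (T / δ)
  have hn0 : 0 < n := by
    by_contra h
    push_neg at h
    interval_cases n
    simp at hn
    exact absurd hn (not_lt.mpr (div_pos hT hδ).le)
  have hnR : (0:ℝ) < n := Nat.cast_pos.mpr hn0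
  set Δ := T / n with hΔdef
  have hΔ : 0 < Δ := div_pos hT hnR
  have hΔδ : Δ < δ := by
    rw [hΔdef, div_lt_iff₀ hnR]
    calc T = (T / δ) * δ := by field_simp
    _ < n * δ := by exact mul_lt_mul_of_pos_right hn hδ
    _ = δ * n := by ring
  -- the uniform partition
  refine ⟨⟨n, hn0, fun i => i * Δ, fun i _ => by
      have : (i:ℝ) < (i+1:ℕ) := by exact_mod_cast Nat.lt_succ_self i
      calc (i:ℝ) * Δ < ((i+1:ℕ):ℝ) * Δ := mul_lt_mul_of_pos_right this hΔ
      _ = ((i+1:ℕ):ℝ) * Δ := rfl, by simp, by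
      rw [hΔdef]; field_simp [hnR.ne']⟩, ?_⟩
  simp only
  -- pieces
  have key : ∀ i ∈ Finset.range n,
      (∫ s in ((i:ℝ)*Δ)..(((i:ℕ)+1:ℕ)*Δ : ℝ), g s ^ 2)
        ≤ (γ (((i:ℕ)+1:ℕ) * Δ) - γ ((i:ℝ) * Δ)) ^ 2 / ((((i:ℕ)+1:ℕ):ℝ) * Δ - (i:ℝ) * Δ)
          + 2 * M * ε' * Δ := by
    intro i hi
    have hin : i < n := Finset.mem_range.mp hi
    set a := (i:ℝ) * Δ with ha
    set b := (((i:ℕ)+1:ℕ):ℝ) * Δ with hb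
    have hiR : (i:ℝ) < ((i:ℕ)+1:ℕ) := by exact_mod_cast Nat.lt_succ_self i
    have hab : a < b := mul_lt_mul_of_pos_right hiR hΔ
    have hba : b - a = Δ := by push_cast [ha, hb]; ring
    have hsub : Icc a b ⊆ Icc 0 T := by
      apply Set.Icc_subset_Icc
      · positivity
      · rw [hb]
        calc (((i:ℕ)+1:ℕ):ℝ) * Δ ≤ (n:ℝ) * Δ := by
              apply mul_le_mul_of_nonneg_right _ hΔ.le
              exact_mod_cast Nat.succ_le_of_lt hin
        _ = T := by rw [hΔdef]; field_simp [hnR.ne']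
    obtain ⟨ξ, hξ, hξeq⟩ := exists_deriv_eq_slope γ hab (hd.continuous.continuousOn)
      (fun x _ => (hd x).differentiableWithinAt)
    have hξmem : ξ ∈ Icc a b := Ioo_subset_Icc_self hξ
    have hbound : ∀ s ∈ Icc a b, g s ^ 2 ≤ g ξ ^ 2 + 2 * M * ε' := by
      intro s hs
      have h1 : dist s ξ < δ := by
        rw [Real.dist_eq]
        have habs : |s - ξ| ≤ b - a := by
          rw [abs_sub_le_iff]
          constructor <;> linarith [hs.1, hs.2, hξmem.1, hξmem.2]
        linarith [hba ▸ habs, hΔδ]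
      have h2 : dist (g s) (g ξ) < ε' := hδ' s (hsub hs) ξ (hsub hξmem) h1
      rw [Real.dist_eq] at h2
      have h3 : |g s| ≤ M := hgM s (hsub hs)
      have h4 : |g ξ| ≤ M := hgM ξ (hsub hξmem)
      have h3' := abs_le.mp h3
      have h4' := abs_le.mp h4
      have h2' := abs_le.mp h2.le
      nlinarith [h2'.1, h2'.2, h3'.1, h3'.2, h4'.1, h4'.2]
    calc (∫ s in a..b, g s ^ 2)
        ≤ ∫ _ in a..b, (g ξ ^ 2 + 2 * M * ε') :=
          intervalIntegral.integral_mono_on hab.le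
            ((hg.pow 2).intervalIntegrable _ _) intervalIntegrable_const hbound
      _ = (g ξ ^ 2 + 2 * M * ε') * (b - a) := by
          rw [intervalIntegral.integral_const]; rw [smul_eq_mul]; ring
      _ = (γ b - γ a) ^ 2 / (b - a) + 2 * M * ε' * Δ := by
          rw [← hgdef] at hξeq
          rw [hξeq, hba]
          field_simp
  -- sum up
  have hsum : ∑ i ∈ Finset.range n, ∫ s in ((i:ℝ)*Δ)..((((i:ℕ)+1:ℕ):ℝ)*Δ), g s ^ 2
      = ∫ s in (0:ℝ)..T, g s ^ 2 := by
    have := intervalIntegral.sum_integral_adjacent_intervals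
      (a := fun i => (i:ℝ) * Δ) (n := n) (μ := volume)
      (fun k _ => ((hg.pow 2).intervalIntegrable _ _))
    have hnT : (n:ℝ) * (T / n) = T := by field_simp
    simpa [hΔdef, mul_comm, mul_div_assoc, hnT] using this
  rw [← hsum]
  calc ∑ i ∈ Finset.range n, ∫ s in ((i:ℝ)*Δ)..((((i:ℕ)+1:ℕ):ℝ)*Δ), g s ^ 2
      ≤ ∑ i ∈ Finset.range n,
          ((γ ((((i:ℕ)+1:ℕ):ℝ) * Δ) - γ ((i:ℝ) * Δ)) ^ 2 / ((((i:ℕ)+1:ℕ):ℝ) * Δ - (i:ℝ) * Δ)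
            + 2 * M * ε' * Δ) := Finset.sum_le_sum key
    _ = (∑ i ∈ Finset.range n,
          (γ ((((i:ℕ)+1:ℕ):ℝ) * Δ) - γ ((i:ℝ) * Δ)) ^ 2 / ((((i:ℕ)+1:ℕ):ℝ) * Δ - (i:ℝ) * Δ))
          + n * (2 * M * ε' * Δ) := by
        rw [Finset.sum_add_distrib, Finset.sum_const, Finset.card_range, nsmul_eq_mul]
    _ ≤ _ := by
        have : (n:ℝ) * (2 * M * ε' * Δ) = ε := by
          rw [hε'def, hΔdef]
          field_simp
        rw [this]

/-- For a continuously differentiable path `γ : [0,T] → ℝ`, the supremum over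
finite partitions of the partition energy equals the Dirichlet energy
`(1/2)∫₀ᵀ γ'(s)² ds`. -/
theorem iSup_partEnergy_eq_dirichlet (T : ℝ) (hT : 0 < T) (γ : ℝ → ℝ)
    (hγ : ContDiff ℝ 1 γ) :
    (⨆ P : TimePartition T, ENNReal.ofReal (partEnergy γ P))
      = ENNReal.ofReal ((1 / 2) * ∫ s in (0 : ℝ)..T, (deriv γ s) ^ 2) := by
  apply le_antisymm
  · apply iSup_le
    intro P
    apply ENNReal.ofReal_le_ofReal
    unfold partEnergy
    have := two_partEnergy_le γ hγ P
    linarith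
  · apply ENNReal.le_of_forall_pos_le_add
    intro ε hε _
    have hε2 : (0:ℝ) < 2 * ε := by positivity
    obtain ⟨P, hP⟩ := exists_partition_ge hT γ hγ hε2
    calc ENNReal.ofReal ((1 / 2) * ∫ s in (0 : ℝ)..T, (deriv γ s) ^ 2)
        ≤ ENNReal.ofReal (partEnergy γ P + ε) := by
          apply ENNReal.ofReal_le_ofReal
          unfold partEnergy
          linarith
      _ ≤ ENNReal.ofReal (partEnergy γ P) + ENNReal.ofReal ε := ENNReal.ofReal_add_le
      _ ≤ (⨆ P : TimePartition T, ENNReal.ofReal (partEnergy γ P)) + ε := by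
          gcongr
          · exact le_iSup (fun P => ENNReal.ofReal (partEnergy γ P)) P
          · simp [ENNReal.ofReal_coe_nnreal]
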